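/- arXiv:1007.3755 — 4 statements merged into one kernel-verified Lean document; each statement's English description precedes it below -/
import Mathlib

section
/- Let A be an irreducible symmetric n×n real matrix with nonnegative entries, n ≥ 2. Then the largest eigenvalue λ₁ of A has a corresponding eigenvector all of whose coordinates are strictly positive. -/
open Matrix

namespace Stmt7Aux

variable {n : ℕ}

lemma star_eq_transpose (U : Matrix (Fin n) (Fin n) ℝ) : star U = Uᵀ := by
  ext i j
  simp [Matrix.star_apply]

lemma dot_starU (U : Matrix (Fin n) (Fin n) ℝ) (x z : Fin n → ℝ) :
    (star U *ᵥ x) ⬝ᵥ z = x ⬝ᵥ (U *ᵥ z) := by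
  rw [star_eq_transpose, Matrix.mulVec_transpose, ← Matrix.dotProduct_mulVec]

/-- Diagonalization facts packaged for a real symmetric matrix. -/
lemma spectral_real (A : Matrix (Fin n) (Fin n) ℝ) (hA : A.IsHermitian) :
    A = (hA.eigenvectorUnitary : Matrix (Fin n) (Fin n) ℝ) * diagonal hA.eigenvalues *
      star (hA.eigenvectorUnitary : Matrix (Fin n) (Fin n) ℝ) := by
  have := hA.spectral_theorem
  simpa using this

lemma quad_form (A : Matrix (Fin n) (Fin n) ℝ) (hA : A.IsHermitian) (x : Fin n → ℝ) :
    x ⬝ᵥ (A *ᵥ x) = ∑ i, hA.eigenvalues i *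
      ((star (hA.eigenvectorUnitary : Matrix (Fin n) (Fin n) ℝ) *ᵥ x) i *
       (star (hA.eigenvectorUnitary : Matrix (Fin n) (Fin n) ℝ) *ᵥ x) i) := by
  set U := (hA.eigenvectorUnitary : Matrix (Fin n) (Fin n) ℝ) with hU
  set y := star U *ᵥ x with hy
  have hAx : A *ᵥ x = U *ᵥ (diagonal hA.eigenvalues *ᵥ y) := by
    conv_lhs => rw [spectral_real A hA]
    rw [← hU, Matrix.mulVec_mulVec, Matrix.mulVec_mulVec]
  rw [hAx, ← dot_starU U x, ← hy]
  simp [dotProduct, Matrix.mulVec_diagonal]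
  exact Finset.sum_congr rfl (fun i _ => by ring)

lemma norm_form (A : Matrix (Fin n) (Fin n) ℝ) (hA : A.IsHermitian) (x : Fin n → ℝ) :
    x ⬝ᵥ x = ∑ i, ((star (hA.eigenvectorUnitary : Matrix (Fin n) (Fin n) ℝ) *ᵥ x) i *
       (star (hA.eigenvectorUnitary : Matrix (Fin n) (Fin n) ℝ) *ᵥ x) i) := by
  set U := (hA.eigenvectorUnitary : Matrix (Fin n) (Fin n) ℝ) with hU
  have h1 : (star U *ᵥ x) ⬝ᵥ (star U *ᵥ x) = x ⬝ᵥ x := by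
    rw [dot_starU, Matrix.mulVec_mulVec,
      (Matrix.mem_unitaryGroup_iff).mp (hA.eigenvectorUnitary).2, Matrix.one_mulVec]
  rw [← h1]
  rfl

lemma eq_case (A : Matrix (Fin n) (Fin n) ℝ) (hA : A.IsHermitian) (x : Fin n → ℝ) (lam : ℝ)
    (h : ∀ i, hA.eigenvalues i * (star (hA.eigenvectorUnitary : Matrix (Fin n) (Fin n) ℝ) *ᵥ x) i
      = lam * (star (hA.eigenvectorUnitary : Matrix (Fin n) (Fin n) ℝ) *ᵥ x) i) :
    A *ᵥ x = lam • x := by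
  set U := (hA.eigenvectorUnitary : Matrix (Fin n) (Fin n) ℝ) with hU
  set y := star U *ᵥ x with hy
  have hAx : A *ᵥ x = U *ᵥ (diagonal hA.eigenvalues *ᵥ y) := by
    conv_lhs => rw [spectral_real A hA]
    rw [← hU, Matrix.mulVec_mulVec, Matrix.mulVec_mulVec]
  have hDy : diagonal hA.eigenvalues *ᵥ y = lam • y := by
    ext i
    simp only [Matrix.mulVec_diagonal, Pi.smul_apply, smul_eq_mul]
    exact h i
  rw [hAx, hDy, Matrix.mulVec_smul, hy, Matrix.mulVec_mulVec,
    (Matrix.mem_unitaryGroup_iff).mp (hA.eigenvectorUnitary).2, Matrix.one_mulVec]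

lemma pow_nonneg_entries (A : Matrix (Fin n) (Fin n) ℝ) (hpos : ∀ i j, 0 ≤ A i j) :
    ∀ k i j, 0 ≤ (A ^ k) i j := by
  intro k
  induction k with
  | zero => intro i j; by_cases h : i = j <;> simp [pow_zero, Matrix.one_apply, h]
  | succ m ih =>
    intro i j
    rw [pow_succ, Matrix.mul_apply]
    exact Finset.sum_nonneg fun l _ => mul_nonneg (ih i l) (hpos l j)

end Stmt7Aux

theorem stmt_7 (n : ℕ) (hn : 2 ≤ n) (A : Matrix (Fin n) (Fin n) ℝ) (hA : A.IsHermitian)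
    (hpos : ∀ i j, 0 ≤ A i j) (hirr : ∀ i j, ∃ k : ℕ, (A ^ k) i j ≠ 0) :
    ∃ v : Fin n → ℝ, A.mulVec v = (⨆ i, hA.eigenvalues i) • v ∧ ∀ i, 0 < v i := by
  classical
  have hne : Nonempty (Fin n) := ⟨⟨0, by omega⟩⟩
  set lam := ⨆ i, hA.eigenvalues i with hlam
  have hle : ∀ i, hA.eigenvalues i ≤ lam := fun i =>
    le_ciSup (Set.Finite.bddAbove (Set.finite_range _)) i
  -- Rayleigh upper bound
  have rayleigh : ∀ x : Fin n → ℝ, x ⬝ᵥ (A *ᵥ x) ≤ lam * (x ⬝ᵥ x) := by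
    intro x
    rw [Stmt7Aux.quad_form A hA x, Stmt7Aux.norm_form A hA x, Finset.mul_sum]
    exact Finset.sum_le_sum fun i _ =>
      mul_le_mul_of_nonneg_right (hle i) (mul_self_nonneg _)
  -- A ≠ 0 and lam > 0
  have hA1 : ∃ i j, 0 < A i j := by
    by_contra h
    push_neg at h
    have hA0 : A = 0 := by
      ext i j; exact le_antisymm (h i j) (hpos i j)
    obtain ⟨k, hk⟩ := hirr ⟨0, by omega⟩ ⟨1, by omega⟩
    rcases Nat.eq_zero_or_pos k with rfl | hkpos
    · simp [Matrix.one_apply, Fin.ext_iff] at hk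
    · apply hk
      rw [hA0, zero_pow (by omega)]
      rfl
  have hlampos : 0 < lam := by
    obtain ⟨i, j, hij⟩ := hA1
    have hxnn : ∀ m, 0 ≤ ((fun m => (if m = i then (1:ℝ) else 0) + (if m = j then 1 else 0)) m) :=
      fun m => by positivity
    set x : Fin n → ℝ := fun m => (if m = i then (1:ℝ) else 0) + (if m = j then 1 else 0) with hx
    have hxi : (1:ℝ) ≤ x i := by
      rw [hx]
      by_cases h : i = j <;> simp [h]
    have hxj : (1:ℝ) ≤ x j := by
      rw [hx]
      by_cases h : j = i <;> simp [h]
    have hxx : 0 < x ⬝ᵥ x := by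
      have h2 : (1:ℝ) ≤ x ⬝ᵥ x := by
        calc (1:ℝ) ≤ x i * x i := by nlinarith
        _ ≤ ∑ m, x m * x m :=
          Finset.single_le_sum (fun m _ => mul_self_nonneg (x m)) (Finset.mem_univ i)
        _ = x ⬝ᵥ x := rfl
      linarith
    have hxAx : 0 < x ⬝ᵥ (A *ᵥ x) := by
      have hAx : ∀ m, 0 ≤ (A *ᵥ x) m := fun m =>
        show (0:ℝ) ≤ ∑ l, A m l * x l from
          Finset.sum_nonneg fun l _ => mul_nonneg (hpos m l) (hxnn l)
      have hterm : A i j * x j ≤ (A *ᵥ x) i :=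
        show A i j * x j ≤ ∑ l, A i l * x l from
          Finset.single_le_sum (fun l _ => mul_nonneg (hpos i l) (hxnn l)) (Finset.mem_univ j)
      have h2 : 0 < (A *ᵥ x) i := lt_of_lt_of_le (by nlinarith) hterm
      calc (0:ℝ) < x i * (A *ᵥ x) i := by nlinarith [hAx i]
      _ ≤ ∑ m, x m * (A *ᵥ x) m :=
        Finset.single_le_sum (fun m _ => mul_nonneg (hxnn m) (hAx m)) (Finset.mem_univ i)
      _ = x ⬝ᵥ (A *ᵥ x) := rfl
    nlinarith [rayleigh x]
  -- eigenvector for lam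
  obtain ⟨i₀, hi₀⟩ := exists_eq_ciSup_of_finite (f := hA.eigenvalues)
  set w : Fin n → ℝ := ⇑(hA.eigenvectorBasis i₀) with hw
  have hweig : A *ᵥ w = lam • w := by
    rw [hw, hA.mulVec_eigenvectorBasis i₀, hi₀]
  have hwne : w ≠ 0 := by
    have := hA.eigenvectorBasis.orthonormal.ne_zero i₀
    intro h
    apply this
    ext m
    exact congrFun h m
  set v : Fin n → ℝ := fun m => |w m| with hv
  have hvnn : ∀ m, 0 ≤ v m := fun m => abs_nonneg _
  have hvne : ∃ m, 0 < v m := by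
    by_contra h
    push_neg at h
    apply hwne
    funext m
    exact abs_eq_zero.mp (le_antisymm (h m) (hvnn m))
  -- pointwise A v ≥ lam v
  have hAvge : ∀ m, lam * v m ≤ (A *ᵥ v) m := by
    intro m
    have h1 : |(A *ᵥ w) m| ≤ (A *ᵥ v) m := by
      calc |(A *ᵥ w) m| = |∑ l, A m l * w l| := rfl
      _ ≤ ∑ l, |A m l * w l| := Finset.abs_sum_le_sum_abs _ _
      _ = ∑ l, A m l * v l := by
        refine Finset.sum_congr rfl fun l _ => ?_
        rw [abs_mul, abs_of_nonneg (hpos m l)]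
      _ = (A *ᵥ v) m := rfl
    have h2 : |(A *ᵥ w) m| = lam * v m := by
      rw [hweig]
      simp only [Pi.smul_apply, smul_eq_mul, abs_mul, abs_of_pos hlampos, hv]
    linarith
  -- v ⬝ (Av - lam v) ≥ 0 and ≤ 0 hence quadratic equality
  have hdotge : lam * (v ⬝ᵥ v) ≤ v ⬝ᵥ (A *ᵥ v) := by
    have : ∑ m, lam * (v m * v m) ≤ ∑ m, v m * (A *ᵥ v) m :=
      Finset.sum_le_sum fun m _ => by
        have := hAvge m
        nlinarith [hvnn m]
    calc lam * (v ⬝ᵥ v) = ∑ m, lam * (v m * v m) := by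
          rw [dotProduct, Finset.mul_sum]
      _ ≤ ∑ m, v m * (A *ᵥ v) m := this
      _ = v ⬝ᵥ (A *ᵥ v) := rfl
  have hquad : v ⬝ᵥ (A *ᵥ v) = lam * (v ⬝ᵥ v) := le_antisymm (rayleigh v) hdotge
  -- equality case of Rayleigh gives eigenvector
  have hveig : A *ᵥ v = lam • v := by
    apply Stmt7Aux.eq_case A hA v lam
    set y := star (hA.eigenvectorUnitary : Matrix (Fin n) (Fin n) ℝ) *ᵥ v with hy
    have hsum : ∑ i, hA.eigenvalues i * (y i * y i) = ∑ i, lam * (y i * y i) := by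
      have e1 := Stmt7Aux.quad_form A hA v
      have e2 := Stmt7Aux.norm_form A hA v
      rw [e1, e2, Finset.mul_sum] at hquad
      exact hquad
    have hterm := (Finset.sum_eq_sum_iff_of_le (fun i _ =>
      mul_le_mul_of_nonneg_right (hle i) (mul_self_nonneg (y i)))).mp hsum
    intro i
    have h := (hterm i (Finset.mem_univ i)).symm
    have h2 : (hA.eigenvalues i - lam) * (y i * y i) = 0 := by ring_nf; linarith
    rcases mul_eq_zero.mp h2 with h3 | h3
    · have : hA.eigenvalues i = lam := by linarith
      rw [this]
    · have : y i = 0 := by nlinarith [mul_self_nonneg (y i)]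
      rw [this, mul_zero, mul_zero]
  -- strict positivity via irreducibility
  refine ⟨v, hveig, ?_⟩
  obtain ⟨j, hj⟩ := hvne
  intro i
  obtain ⟨k, hk⟩ := hirr i j
  have hpowv : ∀ k : ℕ, (A ^ k) *ᵥ v = lam ^ k • v := by
    intro k
    induction k with
    | zero => simp
    | succ m ih =>
      have e : (A ^ (m + 1)) *ᵥ v = (A ^ m) *ᵥ (A *ᵥ v) := by
        rw [Matrix.mulVec_mulVec, ← pow_succ]
      rw [e, hveig, Matrix.mulVec_smul, ih, smul_smul, pow_succ, mul_comm]
  have hkpos : 0 < (A ^ k) i j :=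
    lt_of_le_of_ne (Stmt7Aux.pow_nonneg_entries A hpos k i j) (Ne.symm hk)
  have h1 : (A ^ k) i j * v j ≤ ((A ^ k) *ᵥ v) i :=
    Finset.single_le_sum
      (fun l _ => mul_nonneg (Stmt7Aux.pow_nonneg_entries A hpos k i l) (hvnn l))
      (Finset.mem_univ j)
  have h2 : ((A ^ k) *ᵥ v) i = lam ^ k * v i := by
    rw [hpowv k]; rfl
  have h3 : 0 < lam ^ k * v i := by
    rw [← h2]
    exact lt_of_lt_of_le (by positivity) h1
  have hlk : 0 < lam ^ k := pow_pos hlampos k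
  nlinarith [h3, hlk]
end

section
/- Let A be an irreducible symmetric n×n real matrix with nonnegative entries. Then the largest eigenvalue of A has multiplicity one (its eigenspace is one-dimensional). -/
open Matrix RealInnerProductSpace Finset

private lemma pow_entry_nonneg {n : ℕ} {A : Matrix (Fin n) (Fin n) ℝ}
    (hpos : ∀ i j, 0 ≤ A i j) (k : ℕ) (i j : Fin n) : 0 ≤ (A ^ k) i j := by
  induction k generalizing i j with
  | zero => simp [Matrix.one_apply]; split <;> norm_num
  | succ k ih =>
    rw [pow_succ, Matrix.mul_apply]
    exact Finset.sum_nonneg fun l _ => mul_nonneg (ih i l) (hpos l j)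

private lemma rayleigh_repr {n : ℕ} {A : Matrix (Fin n) (Fin n) ℝ} (hA : A.IsHermitian)
    (x : EuclideanSpace ℝ (Fin n)) :
    A *ᵥ ⇑x = ∑ i, (hA.eigenvalues i * ⟪hA.eigenvectorBasis i, x⟫) • ⇑(hA.eigenvectorBasis i) := by
  set b := hA.eigenvectorBasis with hb
  have hx : ⇑x = ∑ i, ⟪b i, x⟫ • ⇑(b i) := by
    conv_lhs => rw [← b.sum_repr' x]
    rw [WithLp.ofLp_sum]; rfl
  rw [hx, ← Matrix.mulVecLin_apply, map_sum]
  refine Finset.sum_congr rfl fun i _ => ?_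
  rw [LinearMap.map_smul, Matrix.mulVecLin_apply, hA.mulVec_eigenvectorBasis, smul_smul, mul_comm]

private lemma dot_repr {n : ℕ} {A : Matrix (Fin n) (Fin n) ℝ} (hA : A.IsHermitian)
    (x : EuclideanSpace ℝ (Fin n)) :
    (⇑x) ⬝ᵥ (A *ᵥ ⇑x) = ∑ i, hA.eigenvalues i * ⟪hA.eigenvectorBasis i, x⟫ ^ 2 ∧
    (⇑x) ⬝ᵥ (⇑x) = ∑ i, ⟪hA.eigenvectorBasis i, x⟫ ^ 2 := by
  set b := hA.eigenvectorBasis with hb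
  set c : Fin n → ℝ := fun i => ⟪b i, x⟫ with hc
  have hx : ∑ i, c i • b i = x := b.sum_repr' x
  have key : ∀ d : Fin n → ℝ, (⇑x) ⬝ᵥ ⇑(∑ i, d i • b i) = ∑ i, c i * d i := by
    intro d
    have h1 : (⇑x) ⬝ᵥ ⇑(∑ i, d i • b i) = ⟪x, ∑ i, d i • b i⟫ := by
      simp [PiLp.inner_apply, RCLike.inner_apply, conj_trivial, dotProduct, mul_comm]
    rw [h1, ← hx, b.orthonormal.inner_sum]
    simp [conj_trivial]
  constructor
  · have hAx : A *ᵥ ⇑x = ⇑(∑ i, (hA.eigenvalues i * c i) • b i) := by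
      rw [rayleigh_repr hA x, WithLp.ofLp_sum]; rfl
    rw [hAx, key]
    exact Finset.sum_congr rfl fun i _ => by ring
  · have hxx : (⇑x : Fin n → ℝ) = ⇑(∑ i, c i • b i) := by rw [hx]
    nth_rewrite 2 [hxx]
    rw [key]
    exact Finset.sum_congr rfl fun i _ => by ring

private lemma rayleigh_le {n : ℕ} (hn : 0 < n) {A : Matrix (Fin n) (Fin n) ℝ}
    (hA : A.IsHermitian) (x : Fin n → ℝ) :
    x ⬝ᵥ (A *ᵥ x) ≤ (⨆ i, hA.eigenvalues i) * (x ⬝ᵥ x) := by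
  haveI : Nonempty (Fin n) := ⟨⟨0, hn⟩⟩
  obtain ⟨h1, h2⟩ := dot_repr hA ((WithLp.equiv 2 _).symm x)
  have hx : ⇑((WithLp.equiv 2 (Fin n → ℝ)).symm x) = x := rfl
  rw [hx] at h1 h2
  rw [h1, h2, Finset.mul_sum]
  refine Finset.sum_le_sum fun i _ => ?_
  have hle : hA.eigenvalues i ≤ ⨆ i, hA.eigenvalues i :=
    le_ciSup (Set.Finite.bddAbove (Set.finite_range _)) i
  exact mul_le_mul_of_nonneg_right hle (sq_nonneg _)

private lemma rayleigh_eq {n : ℕ} (hn : 0 < n) {A : Matrix (Fin n) (Fin n) ℝ}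
    (hA : A.IsHermitian) (x : Fin n → ℝ)
    (h : (⨆ i, hA.eigenvalues i) * (x ⬝ᵥ x) ≤ x ⬝ᵥ (A *ᵥ x)) :
    A *ᵥ x = (⨆ i, hA.eigenvalues i) • x := by
  haveI : Nonempty (Fin n) := ⟨⟨0, hn⟩⟩
  set μ := ⨆ i, hA.eigenvalues i with hμ
  set X : EuclideanSpace ℝ (Fin n) := (WithLp.equiv 2 _).symm x with hX
  have hx : ⇑X = x := rfl
  set b := hA.eigenvectorBasis with hb
  set c : Fin n → ℝ := fun i => ⟪b i, X⟫ with hc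
  obtain ⟨h1, h2⟩ := dot_repr hA X
  rw [hx] at h1 h2
  have hμle : ∀ i : Fin n, hA.eigenvalues i ≤ μ := fun i =>
    le_ciSup (Set.Finite.bddAbove (Set.finite_range _)) i
  have hsum : ∑ i, (μ - hA.eigenvalues i) * c i ^ 2 = 0 := by
    have heq : ∑ i, (μ - hA.eigenvalues i) * c i ^ 2 =
        μ * (x ⬝ᵥ x) - x ⬝ᵥ (A *ᵥ x) := by
      rw [h1, h2, Finset.mul_sum, ← Finset.sum_sub_distrib]
      exact Finset.sum_congr rfl fun i _ => by ring
    have hle0 : ∑ i, (μ - hA.eigenvalues i) * c i ^ 2 ≤ 0 := by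
      rw [heq]; linarith
    have hge0 : 0 ≤ ∑ i, (μ - hA.eigenvalues i) * c i ^ 2 :=
      Finset.sum_nonneg fun i _ =>
        mul_nonneg (by linarith [hμle i]) (sq_nonneg _)
    linarith
  have hterm : ∀ i ∈ Finset.univ, (μ - hA.eigenvalues i) * c i ^ 2 = 0 :=
    (Finset.sum_eq_zero_iff_of_nonneg fun i _ =>
      mul_nonneg (by linarith [hμle i]) (sq_nonneg _)).mp hsum
  have hAx : A *ᵥ x = ∑ i, (hA.eigenvalues i * c i) • ⇑(b i) := by
    rw [← hx, rayleigh_repr hA X]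
  rw [hAx]
  have hxr : x = ∑ i, c i • ⇑(b i) := by
    conv_lhs => rw [← hx, ← b.sum_repr' X]
    rw [WithLp.ofLp_sum]; rfl
  rw [hxr, Finset.smul_sum]
  refine Finset.sum_congr rfl fun i _ => ?_
  rw [smul_smul]
  rcases eq_or_ne (c i) 0 with h0 | h0
  · rw [h0]; simp
  · have ht := hterm i (Finset.mem_univ i)
    have hc2 : c i ^ 2 ≠ 0 := pow_ne_zero _ h0
    have hlam : hA.eigenvalues i = μ := by
      have := (mul_eq_zero.mp ht).resolve_right hc2
      linarith
    rw [hlam]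

private lemma zero_entry_implies_zero {n : ℕ} (hn : 0 < n) {A : Matrix (Fin n) (Fin n) ℝ}
    (hA : A.IsHermitian) (hpos : ∀ i j, 0 ≤ A i j)
    (hirr : ∀ i j, ∃ k : ℕ, (A ^ k) i j ≠ 0)
    (v : Fin n → ℝ) (hv : A *ᵥ v = (⨆ i, hA.eigenvalues i) • v)
    (i : Fin n) (hvi : v i = 0) : v = 0 := by
  by_contra hne
  set μ := ⨆ i, hA.eigenvalues i with hμ
  set w : Fin n → ℝ := fun j => |v j| with hw
  have hww : w ⬝ᵥ w = v ⬝ᵥ v := by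
    refine Finset.sum_congr rfl fun j _ => ?_
    simp [hw, abs_mul_abs_self]
  have hvAv : v ⬝ᵥ (A *ᵥ v) = μ * (v ⬝ᵥ v) := by
    rw [hv, dotProduct_smul, smul_eq_mul]
  have hcomp : v ⬝ᵥ (A *ᵥ v) ≤ w ⬝ᵥ (A *ᵥ w) := by
    simp only [dotProduct, Matrix.mulVec, Finset.mul_sum]
    rw [Finset.sum_sigma', Finset.sum_sigma']
    refine Finset.sum_le_sum fun ⟨j, l⟩ _ => ?_
    have e1 : v j * (A j l * v l) = A j l * (v j * v l) := by ring
    have e2 : w j * (A j l * w l) = A j l * (w j * w l) := by ring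
    rw [e1, e2]
    refine mul_le_mul_of_nonneg_left ?_ (hpos j l)
    calc v j * v l ≤ |v j * v l| := le_abs_self _
      _ = w j * w l := abs_mul _ _
  have hweq : A *ᵥ w = μ • w := by
    refine rayleigh_eq hn hA w ?_
    rw [hww]
    linarith
  have hk : ∀ k : ℕ, (A ^ k) *ᵥ w = μ ^ k • w := by
    intro k
    induction k with
    | zero => simp [Matrix.one_mulVec]
    | succ k ih =>
      rw [pow_succ', ← Matrix.mulVec_mulVec, ih, Matrix.mulVec_smul, hweq,
        smul_smul, ← pow_succ]
  obtain ⟨j, hj⟩ := Function.ne_iff.mp hne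
  obtain ⟨k, hkij⟩ := hirr i j
  have hzero : ∑ l, (A ^ k) i l * w l = 0 := by
    have hki := congrFun (hk k) i
    simp only [Matrix.mulVec, dotProduct, Pi.smul_apply, smul_eq_mul] at hki
    rw [hki, hw]
    simp [hvi]
  have hterm := (Finset.sum_eq_zero_iff_of_nonneg fun l _ =>
    mul_nonneg (pow_entry_nonneg hpos k i l) (abs_nonneg _)).mp hzero j (Finset.mem_univ j)
  rcases mul_eq_zero.mp hterm with h' | h'
  · exact hkij h'
  · exact hj (abs_eq_zero.mp h')

theorem stmt_8 (n : ℕ) (hn : 0 < n) (A : Matrix (Fin n) (Fin n) ℝ) (hA : A.IsHermitian)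
    (hpos : ∀ i j, 0 ≤ A i j) (hirr : ∀ i j, ∃ k : ℕ, (A ^ k) i j ≠ 0) :
    Module.finrank ℝ
      (Module.End.eigenspace A.mulVecLin (⨆ i, hA.eigenvalues i)) = 1 := by
  haveI : Nonempty (Fin n) := ⟨⟨0, hn⟩⟩
  set μ := ⨆ i, hA.eigenvalues i with hμ
  set E := Module.End.eigenspace A.mulVecLin μ with hE
  have hmem : ∀ v : Fin n → ℝ, v ∈ E ↔ A *ᵥ v = μ • v := by
    intro v
    rw [hE, Module.End.mem_eigenspace_iff, Matrix.mulVecLin_apply]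
  obtain ⟨i₀, hi₀⟩ := exists_eq_ciSup_of_finite (f := hA.eigenvalues)
  have hv₀mem : ⇑(hA.eigenvectorBasis i₀) ∈ E := by
    rw [hmem, hA.mulVec_eigenvectorBasis, hi₀]
  have hv₀ne : (⇑(hA.eigenvectorBasis i₀) : Fin n → ℝ) ≠ 0 := by
    intro h
    exact hA.eigenvectorBasis.orthonormal.ne_zero i₀ (by ext j; exact congrFun h j)
  have hpos' : 0 < Module.finrank ℝ E := by
    rw [Module.finrank_pos_iff_exists_ne_zero]
    exact ⟨⟨_, hv₀mem⟩, fun h => hv₀ne (congrArg Subtype.val h)⟩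
  set idx : Fin n := ⟨0, hn⟩
  have hinj : Function.Injective ((LinearMap.proj idx : (Fin n → ℝ) →ₗ[ℝ] ℝ).comp E.subtype) := by
    rw [← LinearMap.ker_eq_bot, LinearMap.ker_eq_bot']
    intro ⟨v, hvE⟩ hv0
    have hvi : v idx = 0 := hv0
    have := zero_entry_implies_zero hn hA hpos hirr v ((hmem v).mp hvE) idx hvi
    exact Subtype.ext this
  have hle : Module.finrank ℝ E ≤ 1 := by
    have := LinearMap.finrank_le_finrank_of_injective hinj
    simpa using this
  omega
end

section
/- Let A be a symmetric n×n real matrix with nonnegative entries whose second-largest eigenvalue (with multiplicity) exceeds 2, and whose corresponding eigenvector v has both positive and negative entries. Let P = {i : v i > 0} and N = {i : v i < 0}. Then both principal submatrices A_P and A_N have largest eigenvalue strictly greater than 2. -/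
open Matrix

lemma rayleigh_le_iSup {m : Type*} [Fintype m] [DecidableEq m] [Nonempty m]
    {B : Matrix m m ℝ} (hB : B.IsHermitian) (x : m → ℝ) (hx : x ≠ 0) (μ : ℝ)
    (h : μ * (x ⬝ᵥ x) ≤ x ⬝ᵥ B *ᵥ x) : μ ≤ ⨆ i, hB.eigenvalues i := by
  set U : Matrix m m ℝ := (hB.eigenvectorUnitary : Matrix m m ℝ) with hU
  set y : m → ℝ := star U *ᵥ x with hy
  have hstar : star U = Uᵀ := by
    rw [Matrix.star_eq_conjTranspose, Matrix.conjTranspose_eq_transpose_of_trivial]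
  have hUs : U * star U = 1 := (Matrix.mem_unitaryGroup_iff).mp hB.eigenvectorUnitary.2
  have hyy : y ⬝ᵥ y = x ⬝ᵥ x := by
    have h2 := congrArg (fun M => x ⬝ᵥ M *ᵥ x) hUs
    simpa [← Matrix.mulVec_mulVec, dotProduct_mulVec, hstar,
      Matrix.mulVec_transpose, hy] using h2
  have hvecy : x ᵥ* U = y := by rw [hy, hstar, Matrix.mulVec_transpose]
  have hxBx : x ⬝ᵥ B *ᵥ x = ∑ i, hB.eigenvalues i * (y i * y i) := by
    conv_lhs => rw [hB.spectral_theorem, Unitary.conjStarAlgAut_apply]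
    rw [← hU, ← Matrix.mulVec_mulVec, ← Matrix.mulVec_mulVec,
      dotProduct_mulVec x U, hvecy, ← hy]
    simp [Matrix.mulVec_diagonal, dotProduct, mul_comm, mul_left_comm]
  have hsum : ∑ i, hB.eigenvalues i * (y i * y i) ≤ (⨆ j, hB.eigenvalues j) * (y ⬝ᵥ y) := by
    rw [dotProduct, Finset.mul_sum]
    refine Finset.sum_le_sum fun i _ => ?_
    exact mul_le_mul_of_nonneg_right
      (le_ciSup (Set.Finite.bddAbove (Set.finite_range _)) i) (mul_self_nonneg _)
  have hxx : 0 < x ⬝ᵥ x := by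
    rcases lt_or_eq_of_le (Finset.sum_nonneg fun i _ => mul_self_nonneg (x i)) with h' | h'
    · exact h'
    · exact absurd (dotProduct_self_eq_zero.mp h'.symm) hx
  rw [hyy] at hsum
  have hfin : μ * (x ⬝ᵥ x) ≤ (⨆ j, hB.eigenvalues j) * (x ⬝ᵥ x) :=
    h.trans (hxBx ▸ hsum)
  rw [mul_comm μ, mul_comm _ (x ⬝ᵥ x)] at hfin
  exact le_of_mul_le_mul_left hfin hxx

theorem stmt_13 (n : ℕ) (A : Matrix (Fin n) (Fin n) ℝ) (hA : A.IsHermitian)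
    (hpos : ∀ i j, 0 ≤ A i j) (lam2 : ℝ) (hlam2 : 2 < lam2)
    (v : Fin n → ℝ) (heig : A.mulVec v = lam2 • v)
    (hP : ∃ i, 0 < v i) (hN : ∃ i, v i < 0) :
    ∀ (hAP : (A.submatrix (fun i : {i : Fin n // 0 < v i} => (i : Fin n))
              (fun i : {i : Fin n // 0 < v i} => (i : Fin n))).IsHermitian)
      (hAN : (A.submatrix (fun i : {i : Fin n // v i < 0} => (i : Fin n))
              (fun i : {i : Fin n // v i < 0} => (i : Fin n))).IsHermitian),
      2 < ⨆ i, hAP.eigenvalues i ∧ 2 < ⨆ i, hAN.eigenvalues i := by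
  intro hAP hAN
  have heig' : ∀ i, ∑ j, A i j * v j = lam2 * v i := by
    intro i
    have := congrFun heig i
    simpa [Matrix.mulVec, dotProduct] using this
  constructor
  · haveI : Nonempty {i : Fin n // 0 < v i} := hP.elim fun i h => ⟨⟨i, h⟩⟩
    set x : {i : Fin n // 0 < v i} → ℝ := fun i => v i with hxdef
    have hxne : x ≠ 0 := by
      obtain ⟨i⟩ := (inferInstance : Nonempty {i : Fin n // 0 < v i})
      intro h0
      exact absurd (congrFun h0 i) (ne_of_gt i.2)
    have inner : ∀ i : Fin n,
        lam2 * v i ≤ ∑ j : {j : Fin n // 0 < v j}, A i ↑j * v ↑j := by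
      intro i
      have hsub : ∑ j : {j : Fin n // 0 < v j}, A i ↑j * v ↑j
          = ∑ j ∈ Finset.univ.filter (fun j => 0 < v j), A i j * v j :=
        (Finset.sum_subtype (Finset.univ.filter fun j => 0 < v j)
          (fun x => by simp) (fun j => A i j * v j)).symm
      have split := Finset.sum_filter_add_sum_filter_not Finset.univ
        (fun j => 0 < v j) (fun j => A i j * v j)
      have hrest : ∑ j ∈ Finset.univ.filter (fun j => ¬ 0 < v j), A i j * v j ≤ 0 := by
        refine Finset.sum_nonpos fun j hj => ?_
        have : v j ≤ 0 := le_of_not_gt (Finset.mem_filter.mp hj).2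
        exact mul_nonpos_of_nonneg_of_nonpos (hpos i j) this
      rw [hsub]
      have := heig' i
      linarith [split, hrest, this]
    have key : lam2 * (x ⬝ᵥ x) ≤
        x ⬝ᵥ (A.submatrix (fun i : {i : Fin n // 0 < v i} => (i : Fin n))
              (fun i : {i : Fin n // 0 < v i} => (i : Fin n))) *ᵥ x := by
      rw [dotProduct, Finset.mul_sum]
      unfold dotProduct Matrix.mulVec
      refine Finset.sum_le_sum fun i _ => ?_
      have h1 : x i * (lam2 * v ↑i) ≤ x i * ∑ j : {j : Fin n // 0 < v j}, A ↑i ↑j * v ↑j :=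
        mul_le_mul_of_nonneg_left (inner i.1) (le_of_lt i.2)
      calc lam2 * (x i * x i) = x i * (lam2 * v ↑i) := by ring
        _ ≤ x i * ∑ j : {j : Fin n // 0 < v j}, A ↑i ↑j * v ↑j := h1
        _ = x i * ∑ j, A.submatrix _ _ i j * x j := by
            simp [Matrix.submatrix_apply, hxdef, dotProduct]
    exact lt_of_lt_of_le hlam2 (rayleigh_le_iSup hAP x hxne lam2 key)
  · haveI : Nonempty {i : Fin n // v i < 0} := hN.elim fun i h => ⟨⟨i, h⟩⟩
    set x : {i : Fin n // v i < 0} → ℝ := fun i => v i with hxdef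
    have hxne : x ≠ 0 := by
      obtain ⟨i⟩ := (inferInstance : Nonempty {i : Fin n // v i < 0})
      intro h0
      exact absurd (congrFun h0 i) (ne_of_lt i.2)
    have inner : ∀ i : Fin n,
        ∑ j : {j : Fin n // v j < 0}, A i ↑j * v ↑j ≤ lam2 * v i := by
      intro i
      have hsub : ∑ j : {j : Fin n // v j < 0}, A i ↑j * v ↑j
          = ∑ j ∈ Finset.univ.filter (fun j => v j < 0), A i j * v j :=
        (Finset.sum_subtype (Finset.univ.filter fun j => v j < 0)
          (fun x => by simp) (fun j => A i j * v j)).symm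
      have split := Finset.sum_filter_add_sum_filter_not Finset.univ
        (fun j => v j < 0) (fun j => A i j * v j)
      have hrest : 0 ≤ ∑ j ∈ Finset.univ.filter (fun j => ¬ v j < 0), A i j * v j := by
        refine Finset.sum_nonneg fun j hj => ?_
        have : 0 ≤ v j := le_of_not_gt (Finset.mem_filter.mp hj).2
        exact mul_nonneg (hpos i j) this
      rw [hsub]
      have := heig' i
      linarith [split, hrest, this]
    have key : lam2 * (x ⬝ᵥ x) ≤
        x ⬝ᵥ (A.submatrix (fun i : {i : Fin n // v i < 0} => (i : Fin n))
              (fun i : {i : Fin n // v i < 0} => (i : Fin n))) *ᵥ x := by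
      rw [dotProduct, Finset.mul_sum]
      unfold dotProduct Matrix.mulVec
      refine Finset.sum_le_sum fun i _ => ?_
      have h1 : x i * (lam2 * v ↑i) ≤ x i * ∑ j : {j : Fin n // v j < 0}, A ↑i ↑j * v ↑j :=
        mul_le_mul_of_nonpos_left (inner i.1) (le_of_lt i.2)
      calc lam2 * (x i * x i) = x i * (lam2 * v ↑i) := by ring
        _ ≤ x i * ∑ j : {j : Fin n // v j < 0}, A ↑i ↑j * v ↑j := h1
        _ = x i * ∑ j, A.submatrix _ _ i j * x j := by
            simp [Matrix.submatrix_apply, hxdef, dotProduct]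
    exact lt_of_lt_of_le hlam2 (rayleigh_le_iSup hAN x hxne lam2 key)
end

section
/- If v is an eigenvector of a symmetric real matrix A with eigenvalue μ and u is the vector whose i-th coordinate is max(v i, 0) (assumed nonzero), and A has nonnegative entries, then ⟪u, Au⟫ ≥ μ·⟪u, u⟫. -/
open Matrix RealInnerProductSpace

theorem stmt_15 (n : ℕ) (A : Matrix (Fin n) (Fin n) ℝ) (hA : Aᵀ = A)
    (hpos : ∀ i j, 0 ≤ A i j) (μ : ℝ) (v : Fin n → ℝ)
    (heig : A.mulVec v = μ • v)
    (hu : (fun i => max (v i) 0) ≠ (0 : Fin n → ℝ)) :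
    (fun i => max (v i) 0) ⬝ᵥ A.mulVec (fun i => max (v i) 0) ≥
      μ * ((fun i => max (v i) 0) ⬝ᵥ fun i => max (v i) 0) := by
  set u : Fin n → ℝ := fun i => max (v i) 0 with hudef
  have hun : ∀ i, 0 ≤ u i := fun i => le_max_right _ _
  have huv : ∀ i, v i ≤ u i := fun i => le_max_left _ _
  have h1 : u ⬝ᵥ A.mulVec v ≤ u ⬝ᵥ A.mulVec u := by
    apply Finset.sum_le_sum
    intro i _
    apply mul_le_mul_of_nonneg_left _ (hun i)
    simp only [mulVec, dotProduct]
    apply Finset.sum_le_sum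
    intro j _
    exact mul_le_mul_of_nonneg_left (huv j) (hpos i j)
  have h2 : u ⬝ᵥ A.mulVec v = μ * (u ⬝ᵥ u) := by
    rw [heig]
    have : u ⬝ᵥ (μ • v) = μ * (u ⬝ᵥ v) := by
      simp [dotProduct, Finset.mul_sum, mul_comm, mul_assoc, mul_left_comm]
    rw [this]
    congr 1
    apply Finset.sum_congr rfl
    intro i _
    rcases le_or_gt (v i) 0 with h | h
    · simp [hudef, max_eq_right h]
    · simp [hudef, max_eq_left h.le]
  linarith
end
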